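/- For a fixed p ∈ (0, 0.5], if the density f of an absolutely continuous distribution F satisfies f(F⁻¹(p)) ∈ (0,∞) and f(F⁻¹(1−p)) ∈ (0,∞), then the theoretical p-left fence L(F,p) = (1/p)F⁻¹(p) − ((1−p)/p)F⁻¹(1−p) is increasing in p. -/

import Mathlib

open Set

/-- For a fixed `p ∈ (0, 1/2]`, if the density `f` of an absolutely continuous
distribution `F` is positive and finite at the quantiles `F⁻¹(p)` and `F⁻¹(1-p)`,
then the theoretical `p`-left fence
`L(F,p) = (1/p)F⁻¹(p) − ((1−p)/p)F⁻¹(1−p)` is increasing in `p`. -/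
theorem left_fence_increasing
    (F Finv f : ℝ → ℝ)
    (hFmono : StrictMono F) (hFcont : Continuous F)
    (hFinv : ∀ q ∈ Ioo (0:ℝ) 1, F (Finv q) = q)
    (hf : ∀ p ∈ Ioc (0:ℝ) (1/2),
      HasDerivAt F (f (Finv p)) (Finv p) ∧ 0 < f (Finv p) ∧
      HasDerivAt F (f (Finv (1 - p))) (Finv (1 - p)) ∧ 0 < f (Finv (1 - p))) :
    StrictMonoOn (fun p : ℝ => (1/p) * Finv p - ((1 - p)/p) * Finv (1 - p))
      (Ioc (0:ℝ) (1/2)) := by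
  -- derivative data of F at every quantile
  have hder : ∀ q ∈ Ioo (0:ℝ) 1, HasDerivAt F (f (Finv q)) (Finv q) ∧ 0 < f (Finv q) := by
    intro q hq
    rcases le_or_gt q (1/2) with h | h
    · exact ⟨(hf q ⟨hq.1, h⟩).1, (hf q ⟨hq.1, h⟩).2.1⟩
    · have h1 : (1 - q) ∈ Ioc (0:ℝ) (1/2) := ⟨by linarith [hq.2], by linarith⟩
      have h2 := hf (1 - q) h1
      rw [show (1 - (1 - q)) = q by ring] at h2
      exact ⟨h2.2.2.1, h2.2.2.2⟩
  -- continuity of the quantile function on (0,1)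
  have hcont : ∀ q ∈ Ioo (0:ℝ) 1, ContinuousAt Finv q := by
    intro q hq
    rw [ContinuousAt, tendsto_order]
    constructor
    · intro a ha
      have hFa : F a < q := by
        rw [← hFinv q hq]; exact hFmono ha
      filter_upwards [Ioo_mem_nhds hq.1 hq.2, Ioi_mem_nhds hFa] with r hr1 hr2
      have : F a < F (Finv r) := by rw [hFinv r hr1]; exact hr2
      exact hFmono.lt_iff_lt.mp this
    · intro b hb
      have hFb : q < F b := by
        rw [← hFinv q hq]; exact hFmono hb
      filter_upwards [Ioo_mem_nhds hq.1 hq.2, Iio_mem_nhds hFb] with r hr1 hr2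
      have : F (Finv r) < F b := by rw [hFinv r hr1]; exact hr2
      exact hFmono.lt_iff_lt.mp this
  -- derivative of the quantile function
  have hFinvDer : ∀ q ∈ Ioo (0:ℝ) 1, HasDerivAt Finv (f (Finv q))⁻¹ q := by
    intro q hq
    have h := hder q hq
    have hev : ∀ᶠ y in nhds q, F (Finv y) = y := by
      filter_upwards [Ioo_mem_nhds hq.1 hq.2] with y hy using hFinv y hy
    exact HasDerivAt.of_local_left_inverse (hcont q hq) h.1 h.2.ne' hev
  -- derivative of the fence, with positivity
  have hL : ∀ p ∈ Ioc (0:ℝ) (1/2), ∃ d,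
      HasDerivAt (fun q : ℝ => (1/q) * Finv q - ((1 - q)/q) * Finv (1 - q)) d p ∧ 0 < d := by
    intro p hp
    have hp0 : 0 < p := hp.1
    have hp1 : p ∈ Ioo (0:ℝ) 1 := ⟨hp.1, by linarith [hp.2]⟩
    have hp1' : (1 - p) ∈ Ioo (0:ℝ) 1 := ⟨by linarith [hp.2], by linarith⟩
    have hg := hFinvDer p hp1
    have hh := hFinvDer (1 - p) hp1'
    have hgpos := (hder p hp1).2
    have hhpos := (hder (1 - p) hp1').2
    have h2 : HasDerivAt (fun q : ℝ => Finv (1 - q)) ((f (Finv (1 - p)))⁻¹ * (-1)) p :=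
      HasDerivAt.comp p hh ((hasDerivAt_id p).const_sub 1)
    have hA := (hasDerivAt_const p (1:ℝ)).div (hasDerivAt_id p) hp0.ne'
    have hB := ((hasDerivAt_id p).const_sub 1).div (hasDerivAt_id p) hp0.ne'
    have total := (hA.mul hg).sub (hB.mul h2)
    refine ⟨_, total, ?_⟩
    have hab : Finv p ≤ Finv (1 - p) := by
      have : F (Finv p) ≤ F (Finv (1 - p)) := by
        rw [hFinv p hp1, hFinv (1 - p) hp1']; linarith [hp.2]
      exact hFmono.le_iff_le.mp this
    have heq : (0 * p - 1 * 1) / p ^ 2 * Finv p + 1 / p * (f (Finv p))⁻¹ -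
        ((-1 * p - (1 - p) * 1) / p ^ 2 * Finv (1 - p) +
          (1 - p) / p * ((f (Finv (1 - p)))⁻¹ * (-1))) =
        (f (Finv p))⁻¹ / p + (1 - p) * (f (Finv (1 - p)))⁻¹ / p +
          (Finv (1 - p) - Finv p) / p ^ 2 := by
      ring
    simp only [id_eq, Pi.div_apply]
    rw [heq]
    have t1 : 0 < (f (Finv p))⁻¹ / p := div_pos (inv_pos.2 hgpos) hp0
    have t2 : 0 < (1 - p) * (f (Finv (1 - p)))⁻¹ / p :=
      div_pos (mul_pos (by linarith [hp.2]) (inv_pos.2 hhpos)) hp0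
    have t3 : 0 ≤ (Finv (1 - p) - Finv p) / p ^ 2 :=
      div_nonneg (by linarith) (sq_nonneg p)
    linarith
  -- conclude via the positive-derivative criterion
  apply strictMonoOn_of_deriv_pos (convex_Ioc (0:ℝ) (1/2))
  · intro p hp
    obtain ⟨d, hd, -⟩ := hL p hp
    exact hd.continuousAt.continuousWithinAt
  · intro p hp
    rw [interior_Ioc] at hp
    obtain ⟨d, hd, hdpos⟩ := hL p ⟨hp.1, hp.2.le⟩
    rw [hd.deriv]
    exact hdpos
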